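/- Let A, B, X be n×n matrices over ℂ (or over ℝ) and let N = fromBlocks A 0 (X·A − B·X) B. Then exp(N) = fromBlocks (exp A) 0 (X·exp(A) − exp(B)·X) (exp B). Consequently, if Ω is the 2n×n matrix with top block I and bottom block I + X, the bottom n×n block of exp(N)·Ω equals X·exp(A) + exp(B). -/

import Mathlib

open Matrix NormedSpace

theorem exp_fromBlocks_diag {n : ℕ} (A B : Matrix (Fin n) (Fin n) ℂ) :
    exp (Matrix.fromBlocks A 0 0 B) = Matrix.fromBlocks (exp A) 0 0 (exp B) := by
  letI : NormedRing (Matrix (Fin n) (Fin n) ℂ) := Matrix.linftyOpNormedRing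
  letI : NormedAlgebra ℂ (Matrix (Fin n) (Fin n) ℂ) := Matrix.linftyOpNormedAlgebra
  letI : NormedRing (Matrix (Fin n × Bool) (Fin n × Bool) ℂ) := Matrix.linftyOpNormedRing
  letI : NormedAlgebra ℂ (Matrix (Fin n × Bool) (Fin n × Bool) ℂ) :=
    Matrix.linftyOpNormedAlgebra
  letI : NormedRing (Matrix (Fin n ⊕ Fin n) (Fin n ⊕ Fin n) ℂ) := Matrix.linftyOpNormedRing
  letI : NormedAlgebra ℂ (Matrix (Fin n ⊕ Fin n) (Fin n ⊕ Fin n) ℂ) :=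
    Matrix.linftyOpNormedAlgebra
  letI : NormedAlgebra ℚ (Matrix (Fin n) (Fin n) ℂ) := .restrictScalars ℚ ℂ _
  letI : NormedAlgebra ℚ (Matrix (Fin n × Bool) (Fin n × Bool) ℂ) := .restrictScalars ℚ ℂ _
  letI : NormedAlgebra ℚ (Matrix (Fin n ⊕ Fin n) (Fin n ⊕ Fin n) ℂ) := .restrictScalars ℚ ℂ _
  set e : Fin n × Bool ≃ Fin n ⊕ Fin n :=
    (Equiv.prodComm (Fin n) Bool).trans (Equiv.boolProdEquivSum (Fin n)) with he
  set v : Bool → Matrix (Fin n) (Fin n) ℂ := fun b => bif b then B else A with hv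
  have h1 : Matrix.fromBlocks A 0 0 B
      = Matrix.reindexAlgEquiv ℂ ℂ e (Matrix.blockDiagonal v) := by
    ext (i | i) (j | j) <;>
      simp [he, hv, Matrix.blockDiagonal_apply]
  have hcont : Continuous (Matrix.reindexAlgEquiv ℂ ℂ e) :=
    continuous_id.matrix_reindex _ _
  have hexpv : exp v = fun b => bif b then exp B else exp A := by
    funext b
    erw [Pi.coe_exp]
    cases b <;> simp [hv] <;> rfl
  rw [h1]; erw [← map_exp (Matrix.reindexAlgEquiv ℂ ℂ e) hcont]; erw [Matrix.exp_blockDiagonal, hexpv]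
  ext (i | i) (j | j) <;>
    simp [he, Matrix.blockDiagonal_apply]

/-- For `N = fromBlocks A 0 (XA − BX) B`,
`exp N = fromBlocks (exp A) 0 (X exp A − exp B X) (exp B)`; consequently the
bottom block of `exp N · Ω`, where `Ω` has top block `1` and bottom block
`1 + X`, equals `X exp A + exp B`. -/
theorem exp_block_soliton {n : ℕ} (A B X : Matrix (Fin n) (Fin n) ℂ)
    (N : Matrix (Fin n ⊕ Fin n) (Fin n ⊕ Fin n) ℂ)
    (hN : N = Matrix.fromBlocks A 0 (X * A - B * X) B)
    (Ω : Matrix (Fin n ⊕ Fin n) (Fin n) ℂ)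
    (hΩ : Ω = Matrix.fromRows 1 (1 + X)) :
    exp N = Matrix.fromBlocks (exp A) 0 (X * exp A - exp B * X) (exp B) ∧
    (exp N * Ω).submatrix Sum.inr id = X * exp A + exp B := by
  subst hN hΩ
  set S : Matrix (Fin n ⊕ Fin n) (Fin n ⊕ Fin n) ℂ := Matrix.fromBlocks 1 0 X 1 with hS
  set S' : Matrix (Fin n ⊕ Fin n) (Fin n ⊕ Fin n) ℂ := Matrix.fromBlocks 1 0 (-X) 1 with hS'
  have hSS' : S * S' = 1 := by
    simp [hS, hS', Matrix.fromBlocks_multiply, ← Matrix.fromBlocks_one]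
  have hS'S : S' * S = 1 := by
    simp [hS, hS', Matrix.fromBlocks_multiply, ← Matrix.fromBlocks_one]
  set u : (Matrix (Fin n ⊕ Fin n) (Fin n ⊕ Fin n) ℂ)ˣ := ⟨S, S', hSS', hS'S⟩ with hu
  have hconj : Matrix.fromBlocks A 0 (X * A - B * X) B
      = (u : Matrix (Fin n ⊕ Fin n) (Fin n ⊕ Fin n) ℂ) * Matrix.fromBlocks A 0 0 B * ((u⁻¹ : (Matrix (Fin n ⊕ Fin n) (Fin n ⊕ Fin n) ℂ)ˣ) : Matrix (Fin n ⊕ Fin n) (Fin n ⊕ Fin n) ℂ) := by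
    show _ = S * Matrix.fromBlocks A 0 0 B * S'
    simp [hS, hS', Matrix.fromBlocks_multiply, Matrix.mul_neg, sub_eq_add_neg]
  have hexp : exp (Matrix.fromBlocks A 0 (X * A - B * X) B)
      = Matrix.fromBlocks (exp A) 0 (X * exp A - exp B * X) (exp B) := by
    rw [hconj, Matrix.exp_units_conj, exp_fromBlocks_diag]
    show S * _ * S' = _
    simp [hS, hS', Matrix.fromBlocks_multiply, Matrix.mul_neg, sub_eq_add_neg]
  refine ⟨hexp, ?_⟩
  rw [hexp, Matrix.fromBlocks_mul_fromRows]
  have hbot : ∀ (P Q : Matrix (Fin n) (Fin n) ℂ),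
      (Matrix.fromRows P Q).submatrix Sum.inr (id : Fin n → Fin n) = Q := by
    intro P Q; ext i j; rfl
  rw [hbot]
  rw [Matrix.mul_one, Matrix.mul_add, Matrix.mul_one]
  abel
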